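/- Fix integers d, K, T ≥ 1 and reals λ > 0, β_X > 0, L_μ > 0, ρ ≥ 1. Let μ : ℝ → ℝ be nondecreasing and L_μ-Lipschitz. For each arm a ∈ {1,…,K} let θ*_a ∈ ℝ^d, and for each round t ∈ {1,…,T} let D_t ⊆ { x ∈ ℝ^d : ‖x‖₂ ≤ β_X } be a nonempty feasible context set with |⟨x, θ*_a⟩| ≤ 1 for all x ∈ D_t and all a. Suppose the algorithm plays (x_t, a_t) with x_t ∈ D_t and a_t ∈ {1,…,K}, define V_{t,a} := λ·I_d + ∑_{s<t, a_s=a} x_s x_sᵀ, and suppose there are estimates θ̂_{t,a} ∈ ℝ^d with ‖θ̂_{t,a} − θ*_a‖_{V_{t,a}} ≤ ρ for all t, a, such that each round's choice is optimistic: there exists θ_t with ‖θ_t − θ̂_{t,a_t}‖_{V_{t,a_t}} ≤ ρ and ⟨x_t, θ_t⟩ ≥ ⟨x, θ⟩ for every arm a, every x ∈ D_t, and every θ with ‖θ − θ̂_{t,a}‖_{V_{t,a}} ≤ ρ. Then ∑_{t=1}^T [ max_{a ∈ {1,…,K}, x ∈ D_t} μ(⟨x, θ*_a⟩) − μ(⟨x_t,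 θ*_{a_t}⟩) ] ≤ 2 L_μ ρ √( 2 d K T · log(1 + β_X² T/(λ d)) ). -/

import Mathlib

/-- Euclidean dot product on `ℝ^d`. -/
def dotp {d : ℕ} (v w : Fin d → ℝ) : ℝ := ∑ i, v i * w i

/-- Euclidean norm on `ℝ^d`. -/
noncomputable def norm2 {d : ℕ} (u : Fin d → ℝ) : ℝ := Real.sqrt (∑ i, u i ^ 2)

/-- The Mahalanobis-type norm `‖u‖_V = √(uᵀ V u)` associated with a matrix `V`. -/
noncomputable def normV {d : ℕ} (V : Matrix (Fin d) (Fin d) ℝ) (u : Fin d → ℝ) : ℝ :=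
  Real.sqrt (dotp u (V.mulVec u))

/-- The per-arm regularized design matrix
`V_{t,a} = λ·I_d + ∑_{s < t, a_s = a} x_s x_sᵀ`. -/
noncomputable def design {d T K : ℕ} (lam : ℝ) (x : Fin T → Fin d → ℝ)
    (a : Fin T → Fin K) (t : Fin T) (b : Fin K) : Matrix (Fin d) (Fin d) ℝ :=
  lam • (1 : Matrix (Fin d) (Fin d) ℝ) +
    ∑ s ∈ Finset.univ.filter (fun s : Fin T => s < t ∧ a s = b),
      Matrix.vecMulVec (x s) (x s)

open Matrix Finset Real


lemma dot_mulVec_symm {n : Type*} [Fintype n] {A : Matrix n n ℝ} (hA : A.IsHermitian)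
    (u w : n → ℝ) : u ⬝ᵥ A *ᵥ w = w ⬝ᵥ A *ᵥ u := by
  have h : ∀ i j, A j i = A i j := fun i j => by
    conv_lhs => rw [← hA]
    simp [conjTranspose_apply]
  simp only [dotProduct, mulVec]
  simp only [Finset.mul_sum]
  rw [Finset.sum_comm]
  exact Finset.sum_congr rfl fun i _ => Finset.sum_congr rfl fun j _ => by rw [h j i]; ring

lemma psd_cs {n : Type*} [Fintype n] {A : Matrix n n ℝ} (hA : A.PosSemidef)
    (u w : n → ℝ) : (u ⬝ᵥ A *ᵥ w)^2 ≤ (u ⬝ᵥ A *ᵥ u) * (w ⬝ᵥ A *ᵥ w) := by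
  have key : ∀ s : ℝ, 0 ≤ (w ⬝ᵥ A *ᵥ w) * (s * s) + (2 * (u ⬝ᵥ A *ᵥ w)) * s + (u ⬝ᵥ A *ᵥ u) := by
    intro s
    have h0 := hA.dotProduct_mulVec_nonneg (u + s • w)
    simp only [star_trivial, mulVec_add, mulVec_smul, dotProduct_add, add_dotProduct,
      dotProduct_smul, smul_dotProduct, smul_eq_mul] at h0
    rw [dot_mulVec_symm hA.1 u w] at h0 ⊢
    set p := u ⬝ᵥ A *ᵥ u
    set q := w ⬝ᵥ A *ᵥ u
    set r := w ⬝ᵥ A *ᵥ w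
    nlinarith [h0]
  have hd := discrim_le_zero key
  unfold discrim at hd
  nlinarith [hd]

lemma psd_dot_nonneg {n : Type*} [Fintype n] {A : Matrix n n ℝ} (hA : A.PosSemidef)
    (u : n → ℝ) : 0 ≤ u ⬝ᵥ A *ᵥ u := by simpa using hA.dotProduct_mulVec_nonneg u

lemma psd_triangle {n : Type*} [Fintype n] {A : Matrix n n ℝ} (hA : A.PosSemidef)
    (u w : n → ℝ) :
    Real.sqrt ((u + w) ⬝ᵥ A *ᵥ (u + w)) ≤
      Real.sqrt (u ⬝ᵥ A *ᵥ u) + Real.sqrt (w ⬝ᵥ A *ᵥ w) := by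
  have hu := psd_dot_nonneg hA u
  have hw := psd_dot_nonneg hA w
  have hcs : u ⬝ᵥ A *ᵥ w ≤ Real.sqrt (u ⬝ᵥ A *ᵥ u) * Real.sqrt (w ⬝ᵥ A *ᵥ w) := by
    have h1 : u ⬝ᵥ A *ᵥ w ≤ Real.sqrt ((u ⬝ᵥ A *ᵥ w)^2) := by
      rw [Real.sqrt_sq_eq_abs]; exact le_abs_self _
    calc u ⬝ᵥ A *ᵥ w ≤ Real.sqrt ((u ⬝ᵥ A *ᵥ w)^2) := h1
      _ ≤ Real.sqrt ((u ⬝ᵥ A *ᵥ u) * (w ⬝ᵥ A *ᵥ w)) := Real.sqrt_le_sqrt (psd_cs hA u w)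
      _ = _ := Real.sqrt_mul hu _
  have hexp : (u + w) ⬝ᵥ A *ᵥ (u + w)
      = u ⬝ᵥ A *ᵥ u + 2 * (u ⬝ᵥ A *ᵥ w) + w ⬝ᵥ A *ᵥ w := by
    simp only [mulVec_add, dotProduct_add, add_dotProduct]
    rw [dot_mulVec_symm hA.1 w u]; ring
  rw [hexp]
  have hle : u ⬝ᵥ A *ᵥ u + 2 * (u ⬝ᵥ A *ᵥ w) + w ⬝ᵥ A *ᵥ w
      ≤ (Real.sqrt (u ⬝ᵥ A *ᵥ u) + Real.sqrt (w ⬝ᵥ A *ᵥ w))^2 := by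
    have h1 := Real.sq_sqrt hu
    have h2 := Real.sq_sqrt hw
    nlinarith [hcs]
  calc Real.sqrt _ ≤ Real.sqrt ((Real.sqrt (u ⬝ᵥ A *ᵥ u) + Real.sqrt (w ⬝ᵥ A *ᵥ w))^2) :=
        Real.sqrt_le_sqrt hle
    _ = _ := Real.sqrt_sq (by positivity)

lemma pd_cs_inv {n : Type*} [Fintype n] [DecidableEq n] {A : Matrix n n ℝ} (hA : A.PosDef)
    (v u : n → ℝ) :
    v ⬝ᵥ u ≤ Real.sqrt (v ⬝ᵥ A⁻¹ *ᵥ v) * Real.sqrt (u ⬝ᵥ A *ᵥ u) := by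
  have hAinv : A⁻¹.PosDef := hA.inv
  set y := A⁻¹ *ᵥ v with hy
  have hAy : A *ᵥ y = v := by
    rw [hy, mulVec_mulVec, Matrix.mul_nonsing_inv _ (isUnit_iff_ne_zero.mpr hA.det_pos.ne'), one_mulVec]
  have hPSD := hA.posSemidef
  have key : v ⬝ᵥ u = y ⬝ᵥ A *ᵥ u := by
    rw [← hAy, dotProduct_comm, dot_mulVec_symm hA.1 u y]
  have hyy : y ⬝ᵥ A *ᵥ y = v ⬝ᵥ A⁻¹ *ᵥ v := by
    rw [hAy, dotProduct_comm]
  rw [key, ← hyy]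
  calc y ⬝ᵥ A *ᵥ u ≤ Real.sqrt ((y ⬝ᵥ A *ᵥ u)^2) := by
        rw [Real.sqrt_sq_eq_abs]; exact le_abs_self _
    _ ≤ Real.sqrt ((y ⬝ᵥ A *ᵥ y) * (u ⬝ᵥ A *ᵥ u)) := Real.sqrt_le_sqrt (psd_cs hPSD y u)
    _ = _ := Real.sqrt_mul (psd_dot_nonneg hPSD y) _

lemma det_rank_one_update {n : Type*} [Fintype n] [DecidableEq n]
    {A : Matrix n n ℝ} (hA : A.PosDef) (v : n → ℝ) :
    (A + vecMulVec v v).det = A.det * (1 + v ⬝ᵥ A⁻¹ *ᵥ v) := by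
  have hU : IsUnit A.det := isUnit_iff_ne_zero.mpr hA.det_pos.ne'
  rw [vecMulVec_eq Unit, Matrix.det_add_replicateCol_mul_replicateRow hU]
  congr 1
  rw [det_unique]
  simp only [Matrix.add_apply, Matrix.one_apply_eq, Matrix.mul_assoc]
  congr 1

-- trace = sum of eigenvalues for hermitian real matrix
lemma trace_eq_sum_eig {n : Type*} [Fintype n] [DecidableEq n]
    {A : Matrix n n ℝ} (hA : A.IsHermitian) :
    A.trace = ∑ i, hA.eigenvalues i := by
  simpa using hA.trace_eq_sum_eigenvalues

lemma logdet_le_card_log_trace {n : Type*} [Fintype n] [DecidableEq n]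
    {A : Matrix n n ℝ} (hA : A.PosDef) (hn : 0 < Fintype.card n) :
    Real.log A.det ≤ (Fintype.card n : ℝ) * Real.log (A.trace / Fintype.card n) := by
  set c : ℝ := (Fintype.card n : ℝ) with hc
  have hc0 : 0 < c := by positivity
  have h := hA.isHermitian
  have hpos : ∀ i, 0 < h.eigenvalues i := hA.eigenvalues_pos
  have hdet : A.det = ∏ i, h.eigenvalues i := by simpa using h.det_eq_prod_eigenvalues
  have htr : A.trace = ∑ i, h.eigenvalues i := trace_eq_sum_eig h
  have hlogdet : Real.log A.det = ∑ i, Real.log (h.eigenvalues i) := by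
    rw [hdet, Real.log_prod (fun i _ => (hpos i).ne')]
  have hcc : ConcaveOn ℝ (Set.Ioi 0) Real.log := strictConcaveOn_log_Ioi.concaveOn
  have hj := hcc.le_map_sum (t := Finset.univ) (w := fun _ : n => c⁻¹) (p := h.eigenvalues)
    (fun i _ => by positivity)
    (by simp [Finset.sum_const, hc]; field_simp)
    (fun i _ => Set.mem_Ioi.mpr (hpos i))
  simp only [smul_eq_mul, ← Finset.mul_sum] at hj
  rw [hlogdet, htr, div_eq_inv_mul]
  calc ∑ i, Real.log (h.eigenvalues i)
      = c * (c⁻¹ * ∑ i, Real.log (h.eigenvalues i)) := by field_simp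
    _ ≤ c * Real.log (c⁻¹ * ∑ i, h.eigenvalues i) := by
        apply mul_le_mul_of_nonneg_left _ hc0.le
        exact hj

lemma min_le_two_log {s : ℝ} (hs : 0 ≤ s) : min 1 s ≤ 2 * Real.log (1 + s) := by
  have h1s : (0:ℝ) < 1 + s := by linarith
  have hlb : s / (1 + s) ≤ Real.log (1 + s) := by
    have := Real.one_sub_inv_le_log_of_pos h1s
    have : 1 - (1 + s)⁻¹ = s / (1 + s) := by field_simp; ring
    linarith [Real.one_sub_inv_le_log_of_pos h1s, this]
  rcases le_total s 1 with h | h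
  · have : min 1 s = s := min_eq_right h
    rw [this]
    have h2 : 2 * (s / (1+s)) - s = s * (1 - s) / (1 + s) := by field_simp; ring
    have h3 : 0 ≤ s * (1 - s) / (1 + s) :=
      div_nonneg (mul_nonneg hs (by linarith)) h1s.le
    linarith
  · have hm : min 1 s = 1 := min_eq_left h
    rw [hm]
    have h2 : Real.log 2 ≤ Real.log (1 + s) := Real.log_le_log (by norm_num) (by linarith)
    have := Real.log_two_gt_d9
    linarith

lemma psd_sum {n ι : Type*} [Fintype n] (t : Finset ι) (f : ι → Matrix n n ℝ)
    (hf : ∀ i ∈ t, (f i).PosSemidef) : (∑ i ∈ t, f i).PosSemidef := by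
  classical
  induction t using Finset.induction_on with
  | empty => simpa using Matrix.PosSemidef.zero
  | @insert a s hx ih =>
    rw [Finset.sum_insert hx]
    exact (hf a (Finset.mem_insert_self a s)).add (ih fun i hi => hf i (Finset.mem_insert_of_mem hi))

lemma psd_vecMulVec {n : Type*} [Fintype n] (v : n → ℝ) : (vecMulVec v v).PosSemidef := by
  rw [vecMulVec_eq Unit]
  have : Matrix.replicateRow Unit v = (Matrix.replicateCol Unit v)ᴴ := by
    ext i j; simp [Matrix.replicateRow_apply, Matrix.replicateCol_apply]
  rw [this]
  exact posSemidef_self_mul_conjTranspose _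
/-- Recourse regret bound for the GLRB algorithm (deterministic core): on the event
that every true arm parameter lies in its confidence ellipsoid of radius `ρ`, if each
round's choice is optimistic over the feasible context set `D_t`, arms, and confidence
ellipsoids, then the cumulative recourse regret w.r.t. the generalized linear reward
`μ(⟨x, θ*_a⟩)` is at most `2 L_μ ρ √(2 d K T · log(1 + β_X² T/(λ d)))`. -/
theorem glrb_recourse_regret_bound
    (d K T : ℕ) (hd : 1 ≤ d) (hK : 1 ≤ K) (hT : 1 ≤ T)
    (lam βX Lμ ρ : ℝ) (hlam : 0 < lam) (hβ : 0 < βX) (hL : 0 < Lμ) (hρ : 1 ≤ ρ)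
    (μ : ℝ → ℝ) (hmono : Monotone μ)
    (hlip : ∀ s u : ℝ, |μ s - μ u| ≤ Lμ * |s - u|)
    (θs : Fin K → Fin d → ℝ)
    (D : Fin T → Set (Fin d → ℝ)) (hDne : ∀ t, (D t).Nonempty)
    (hDb : ∀ t, ∀ z ∈ D t, norm2 z ≤ βX)
    (hDθ : ∀ t, ∀ z ∈ D t, ∀ b : Fin K, |dotp z (θs b)| ≤ 1)
    (x : Fin T → Fin d → ℝ) (a : Fin T → Fin K) (hx : ∀ t, x t ∈ D t)
    (θhat : Fin T → Fin K → Fin d → ℝ)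
    (hconf : ∀ t b, normV (design lam x a t b) (θhat t b - θs b) ≤ ρ)
    (hopt : ∀ t, ∃ θt : Fin d → ℝ,
      normV (design lam x a t (a t)) (θt - θhat t (a t)) ≤ ρ ∧
      ∀ (b : Fin K) (z θ' : Fin d → ℝ), z ∈ D t →
        normV (design lam x a t b) (θ' - θhat t b) ≤ ρ →
        dotp z θ' ≤ dotp (x t) θt) :
    ∑ t, (sSup ((fun p : Fin K × (Fin d → ℝ) => μ (dotp p.2 (θs p.1))) '' {p | p.2 ∈ D t})
          - μ (dotp (x t) (θs (a t))))
      ≤ 2 * Lμ * ρ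
          * Real.sqrt (2 * d * K * T * Real.log (1 + βX ^ 2 * T / (lam * d))) := by
  classical
  set c : ℝ := βX ^ 2 * T / (lam * d) with hcdef
  have hc0 : 0 ≤ c := by positivity
  set M : Fin K → ℕ → Matrix (Fin d) (Fin d) ℝ := fun b n =>
    lam • (1 : Matrix (Fin d) (Fin d) ℝ) +
      ∑ s ∈ Finset.univ.filter (fun s : Fin T => (s : ℕ) < n ∧ a s = b),
        Matrix.vecMulVec (x s) (x s) with hMdef
  have hdesign : ∀ (t : Fin T) (b : Fin K), design lam x a t b = M b t := by
    intro t b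
    rfl
  have hMpd : ∀ (b : Fin K) (n : ℕ), (M b n).PosDef := by
    intro b n
    apply Matrix.PosDef.add_posSemidef
    · rw [Matrix.smul_one_eq_diagonal]
      exact Matrix.PosDef.diagonal (fun _ => hlam)
    · exact psd_sum _ _ (fun s _ => psd_vecMulVec (x s))
  have hnormV : ∀ (t : Fin T) (b : Fin K) (u : Fin d → ℝ),
      normV (design lam x a t b) u = Real.sqrt (u ⬝ᵥ (M b t) *ᵥ u) := by
    intro t b u
    rw [normV, hdesign]
    rfl
  have hconf' : ∀ (t : Fin T) (b : Fin K),
      Real.sqrt ((θs b - θhat t b) ⬝ᵥ (M b t) *ᵥ (θs b - θhat t b)) ≤ ρ := by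
    intro t b
    have h := hconf t b
    rw [hnormV] at h
    have hneg : θs b - θhat t b = -(θhat t b - θs b) := (neg_sub _ _).symm
    rw [hneg, Matrix.mulVec_neg, dotProduct_neg, neg_dotProduct, neg_neg]
    exact h
  have hconfV : ∀ (t : Fin T) (b : Fin K),
      normV (design lam x a t b) (θs b - θhat t b) ≤ ρ := by
    intro t b
    rw [hnormV]
    exact hconf' t b
  set q : Fin T → ℝ := fun t => x t ⬝ᵥ (M (a t) t)⁻¹ *ᵥ x t with hqdef
  have hq0 : ∀ t, 0 ≤ q t := fun t =>
    psd_dot_nonneg (hMpd (a t) t).inv.posSemidef _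
  set w : Fin T → ℝ := fun t => Real.sqrt (q t) with hwdef
  have hw0 : ∀ t, 0 ≤ w t := fun t => Real.sqrt_nonneg _
  -- per-round bound
  have hstep : ∀ t : Fin T,
      (sSup ((fun p : Fin K × (Fin d → ℝ) => μ (dotp p.2 (θs p.1))) '' {p | p.2 ∈ D t})
        - μ (dotp (x t) (θs (a t)))) ≤ 2 * Lμ * ρ * min 1 (w t) := by
    intro t
    obtain ⟨θt, hθt1, hθt2⟩ := hopt t
    set S := ((fun p : Fin K × (Fin d → ℝ) => μ (dotp p.2 (θs p.1))) '' {p | p.2 ∈ D t}) with hS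
    obtain ⟨z0, hz0⟩ := hDne t
    have hSne : S.Nonempty := ⟨_, ⟨(a t, z0), hz0, rfl⟩⟩
    have hub1 : ∀ y ∈ S, y ≤ μ (dotp (x t) θt) := by
      rintro y ⟨⟨b, z⟩, hz, rfl⟩
      exact hmono (hθt2 b z (θs b) hz (hconfV t b))
    have hub2 : ∀ y ∈ S, y ≤ μ (dotp (x t) (θs (a t))) + 2 * Lμ := by
      rintro y ⟨⟨b, z⟩, hz, rfl⟩
      have h1 := hlip (dotp z (θs b)) (dotp (x t) (θs (a t)))
      have hz1 := hDθ t z hz b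
      have hz2 := hDθ t (x t) (hx t) (a t)
      have h2 : |dotp z (θs b) - dotp (x t) (θs (a t))| ≤ 2 := by
        calc |dotp z (θs b) - dotp (x t) (θs (a t))|
            ≤ |dotp z (θs b)| + |dotp (x t) (θs (a t))| := abs_sub _ _
          _ ≤ 2 := by linarith
      have h3 : μ (dotp z (θs b)) - μ (dotp (x t) (θs (a t))) ≤ Lμ * 2 := by
        calc μ (dotp z (θs b)) - μ (dotp (x t) (θs (a t)))
            ≤ |μ (dotp z (θs b)) - μ (dotp (x t) (θs (a t)))| := le_abs_self _
          _ ≤ Lμ * |dotp z (θs b) - dotp (x t) (θs (a t))| := h1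
          _ ≤ Lμ * 2 := by nlinarith [h2]
      linarith
    have hdiff0 : dotp (x t) (θs (a t)) ≤ dotp (x t) θt :=
      hθt2 (a t) (x t) (θs (a t)) (hx t) (hconfV t (a t))
    have htri : Real.sqrt ((θt - θs (a t)) ⬝ᵥ (M (a t) t) *ᵥ (θt - θs (a t))) ≤ 2 * ρ := by
      have hsplit : θt - θs (a t) = (θt - θhat t (a t)) + (θhat t (a t) - θs (a t)) := by
        abel
      rw [hsplit]
      calc Real.sqrt (((θt - θhat t (a t)) + (θhat t (a t) - θs (a t))) ⬝ᵥ
              (M (a t) t) *ᵥ ((θt - θhat t (a t)) + (θhat t (a t) - θs (a t))))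
          ≤ Real.sqrt ((θt - θhat t (a t)) ⬝ᵥ M (a t) t *ᵥ (θt - θhat t (a t)))
              + Real.sqrt ((θhat t (a t) - θs (a t)) ⬝ᵥ M (a t) t *ᵥ (θhat t (a t) - θs (a t))) :=
            psd_triangle (hMpd (a t) t).posSemidef _ _
        _ ≤ ρ + ρ := by
            apply add_le_add
            · have h := hθt1; rw [hnormV] at h; exact h
            · have h := hconf t (a t); rw [hnormV] at h; exact h
        _ = 2 * ρ := by ring
    have hgap : dotp (x t) θt - dotp (x t) (θs (a t)) ≤ 2 * ρ * w t := by
      have heq : dotp (x t) θt - dotp (x t) (θs (a t)) = x t ⬝ᵥ (θt - θs (a t)) :=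
        (dotProduct_sub _ _ _).symm
      rw [heq]
      calc x t ⬝ᵥ (θt - θs (a t))
          ≤ Real.sqrt (x t ⬝ᵥ (M (a t) t)⁻¹ *ᵥ x t)
            * Real.sqrt ((θt - θs (a t)) ⬝ᵥ (M (a t) t) *ᵥ (θt - θs (a t))) :=
            pd_cs_inv (hMpd (a t) t) _ _
        _ ≤ w t * (2 * ρ) := mul_le_mul_of_nonneg_left htri (hw0 t)
        _ = 2 * ρ * w t := by ring
    have hA : sSup S - μ (dotp (x t) (θs (a t))) ≤ 2 * Lμ * ρ * w t := by
      have hsup := csSup_le hSne hub1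
      have hlipd : μ (dotp (x t) θt) - μ (dotp (x t) (θs (a t)))
          ≤ Lμ * (dotp (x t) θt - dotp (x t) (θs (a t))) := by
        have h1 := hlip (dotp (x t) θt) (dotp (x t) (θs (a t)))
        have h1' := (le_abs_self (μ (dotp (x t) θt) - μ (dotp (x t) (θs (a t))))).trans h1
        rwa [abs_of_nonneg (sub_nonneg.mpr hdiff0)] at h1'
      have hmul : Lμ * (dotp (x t) θt - dotp (x t) (θs (a t))) ≤ Lμ * (2 * ρ * w t) :=
        mul_le_mul_of_nonneg_left hgap hL.le
      have hr : Lμ * (2 * ρ * w t) = 2 * Lμ * ρ * w t := by ring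
      linarith
    have hB : sSup S - μ (dotp (x t) (θs (a t))) ≤ 2 * Lμ * ρ := by
      have hsup := csSup_le hSne hub2
      nlinarith [hsup]
    rcases le_total (w t) 1 with h | h
    · rw [min_eq_right h]; exact hA
    · rw [min_eq_left h, mul_one]; exact hB
  -- per-arm potential bound
  have hpot : ∀ b : Fin K,
      ∑ t ∈ Finset.univ.filter (fun t : Fin T => a t = b), min 1 (q t)
        ≤ 2 * (d * Real.log (1 + c)) := by
    intro b
    set f : ℕ → ℝ := fun n => Real.log (M b n).det with hfdef
    have hstep2 : ∀ t : Fin T,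
        (if a t = b then min 1 (q t) else 0) ≤ 2 * (f ((t : ℕ) + 1) - f (t : ℕ)) := by
      intro t
      have hfilter : Finset.univ.filter (fun s : Fin T => (s:ℕ) < (t:ℕ)+1 ∧ a s = b)
          = if a t = b then
              insert t (Finset.univ.filter (fun s : Fin T => (s:ℕ) < (t:ℕ) ∧ a s = b))
            else Finset.univ.filter (fun s : Fin T => (s:ℕ) < (t:ℕ) ∧ a s = b) := by
        split_ifs with hab
        · ext s
          simp only [Finset.mem_filter, Finset.mem_univ, true_and, Finset.mem_insert,
            Nat.lt_succ_iff_lt_or_eq]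
          constructor
          · rintro ⟨h1 | h1, h2⟩
            · exact Or.inr ⟨h1, h2⟩
            · exact Or.inl (Fin.ext h1)
          · rintro (rfl | ⟨h1, h2⟩)
            · exact ⟨Or.inr rfl, hab⟩
            · exact ⟨Or.inl h1, h2⟩
        · ext s
          simp only [Finset.mem_filter, Finset.mem_univ, true_and,
            Nat.lt_succ_iff_lt_or_eq]
          constructor
          · rintro ⟨h1 | h1, h2⟩
            · exact ⟨h1, h2⟩
            · exact absurd (Fin.ext h1 ▸ h2) hab
          · rintro ⟨h1, h2⟩
            exact ⟨Or.inl h1, h2⟩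
      have hMstep : M b ((t:ℕ)+1)
          = if a t = b then M b (t:ℕ) + vecMulVec (x t) (x t) else M b (t:ℕ) := by
        rw [hMdef]
        simp only
        rw [hfilter]
        split_ifs with hab
        · rw [Finset.sum_insert (by simp)]
          abel
        · rfl
      split_ifs with hab
      · have hdet := det_rank_one_update (hMpd b (t:ℕ)) (x t)
        have hq : q t = x t ⬝ᵥ (M b (t:ℕ))⁻¹ *ᵥ x t := by rw [hqdef]; simp only; rw [hab]
        have hqnn : 0 ≤ x t ⬝ᵥ (M b (t:ℕ))⁻¹ *ᵥ x t :=
          psd_dot_nonneg (hMpd b (t:ℕ)).inv.posSemidef (x t)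
        have h1q : (0:ℝ) < 1 + x t ⬝ᵥ (M b (t:ℕ))⁻¹ *ᵥ x t := by linarith
        have hflog : f ((t:ℕ)+1) - f (t:ℕ)
            = Real.log (1 + x t ⬝ᵥ (M b (t:ℕ))⁻¹ *ᵥ x t) := by
          rw [hfdef]
          simp only
          rw [hMstep, if_pos hab, hdet,
            Real.log_mul (hMpd b (t:ℕ)).det_pos.ne' h1q.ne']
          ring
        rw [hflog, hq]
        exact min_le_two_log hqnn
      · have hfeq : f ((t:ℕ)+1) = f (t:ℕ) := by
          rw [hfdef]; simp only; rw [hMstep, if_neg hab]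
        rw [hfeq]
        simp
    rw [Finset.sum_filter]
    have h2 : ∑ t : Fin T, (if a t = b then min 1 (q t) else 0)
        ≤ ∑ t : Fin T, 2 * (f ((t:ℕ)+1) - f (t:ℕ)) := Finset.sum_le_sum fun t _ => hstep2 t
    have h3 : ∑ t : Fin T, 2 * (f ((t:ℕ)+1) - f (t:ℕ)) = 2 * (f T - f 0) := by
      rw [← Finset.mul_sum]
      congr 1
      rw [Fin.sum_univ_eq_sum_range (fun n => f (n+1) - f n) T]
      exact Finset.sum_range_sub f T
    have hf0 : f 0 = d * Real.log lam := by
      have hM0 : M b 0 = lam • (1 : Matrix (Fin d) (Fin d) ℝ) := by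
        rw [hMdef]; simp
      rw [hfdef]
      simp only
      rw [hM0, Matrix.det_smul, Matrix.det_one, mul_one, Fintype.card_fin, Real.log_pow]
    have htr : (M b T).trace = lam * d +
        ∑ s ∈ Finset.univ.filter (fun s : Fin T => (s:ℕ) < T ∧ a s = b),
          (vecMulVec (x s) (x s)).trace := by
      rw [hMdef]
      simp only
      rw [Matrix.trace_add, Matrix.trace_smul, Matrix.trace_one, Matrix.trace_sum]
      simp [Fintype.card_fin]
    have htrterm : ∀ s : Fin T, (vecMulVec (x s) (x s)).trace = ∑ i, (x s i)^2 := by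
      intro s
      simp [Matrix.trace, Matrix.diag, Matrix.vecMulVec_apply, sq]
    have htrnn : ∀ s : Fin T, 0 ≤ (vecMulVec (x s) (x s)).trace := by
      intro s; rw [htrterm]; positivity
    have hxb : ∀ s : Fin T, (vecMulVec (x s) (x s)).trace ≤ βX^2 := by
      intro s
      have h2b := hDb s (x s) (hx s)
      rw [norm2] at h2b
      have h3b : 0 ≤ ∑ i, (x s i)^2 := by positivity
      rw [htrterm]
      nlinarith [Real.sq_sqrt h3b, Real.sqrt_nonneg (∑ i, (x s i)^2)]
    have htrb : (M b T).trace ≤ lam * d + βX^2 * T := by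
      rw [htr]
      have hcard : (Finset.univ.filter (fun s : Fin T => (s:ℕ) < T ∧ a s = b)).card ≤ T := by
        calc _ ≤ Finset.univ.card := Finset.card_filter_le _ _
          _ = T := by simp
      calc lam * d + ∑ s ∈ Finset.univ.filter (fun s : Fin T => (s:ℕ) < T ∧ a s = b),
            (vecMulVec (x s) (x s)).trace
          ≤ lam * d + ∑ _s ∈ Finset.univ.filter (fun s : Fin T => (s:ℕ) < T ∧ a s = b), βX^2 :=
            add_le_add (le_refl _) (Finset.sum_le_sum fun s _ => hxb s)
        _ = lam * d + (Finset.univ.filter (fun s : Fin T => (s:ℕ) < T ∧ a s = b)).card * βX^2 := by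
            rw [Finset.sum_const, nsmul_eq_mul]
        _ ≤ lam * d + T * βX^2 := by
            have : ((Finset.univ.filter (fun s : Fin T => (s:ℕ) < T ∧ a s = b)).card : ℝ) ≤ T := by
              exact_mod_cast hcard
            nlinarith [sq_nonneg βX]
        _ = lam * d + βX^2 * T := by ring
    have htr0 : lam * d ≤ (M b T).trace := by
      rw [htr]
      have : 0 ≤ ∑ s ∈ Finset.univ.filter (fun s : Fin T => (s:ℕ) < T ∧ a s = b),
          (vecMulVec (x s) (x s)).trace := Finset.sum_nonneg fun s _ => htrnn s
      linarith
    have hd0 : (0:ℝ) < d := by exact_mod_cast hd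
    have hT0 : (0:ℝ) < T := by exact_mod_cast hT
    have hfT : f T ≤ d * Real.log lam + d * Real.log (1 + c) := by
      have h4 := logdet_le_card_log_trace (hMpd b T) (by simp [Fintype.card_fin]; omega)
      rw [Fintype.card_fin] at h4
      have htrpos : (0:ℝ) < (M b T).trace := lt_of_lt_of_le (by positivity) htr0
      have h5 : (M b T).trace / d ≤ lam * (1 + c) := by
        rw [div_le_iff₀ hd0, hcdef]
        have hcc : lam * (1 + βX ^ 2 * T / (lam * d)) * d = lam * d + βX^2 * T := by
          field_simp
        rw [hcc]
        exact htrb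
      have h6 : Real.log ((M b T).trace / d) ≤ Real.log (lam * (1 + c)) :=
        Real.log_le_log (by positivity) h5
      have h7 : Real.log (lam * (1 + c)) = Real.log lam + Real.log (1 + c) :=
        Real.log_mul hlam.ne' (by linarith)
      calc f T ≤ (d:ℝ) * Real.log ((M b T).trace / d) := h4
        _ ≤ (d:ℝ) * (Real.log lam + Real.log (1 + c)) := by
            rw [← h7]; exact mul_le_mul_of_nonneg_left h6 hd0.le
        _ = d * Real.log lam + d * Real.log (1 + c) := by ring
    calc ∑ t : Fin T, (if a t = b then min 1 (q t) else 0)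
        ≤ ∑ t : Fin T, 2 * (f ((t:ℕ)+1) - f (t:ℕ)) := h2
      _ = 2 * (f T - f 0) := h3
      _ ≤ 2 * (d * Real.log (1 + c)) := by rw [hf0]; linarith
  -- assembly
  have hsum1 : ∑ t, (sSup ((fun p : Fin K × (Fin d → ℝ) => μ (dotp p.2 (θs p.1))) '' {p | p.2 ∈ D t})
        - μ (dotp (x t) (θs (a t)))) ≤ 2 * Lμ * ρ * ∑ t, min 1 (w t) := by
    rw [Finset.mul_sum]
    exact Finset.sum_le_sum fun t _ => hstep t
  have hminsq : ∀ t : Fin T, (min 1 (w t))^2 = min 1 (q t) := by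
    intro t
    rcases le_total (w t) 1 with h | h
    · rw [min_eq_right h, min_eq_right, Real.sq_sqrt (hq0 t)]
      have := Real.sq_sqrt (hq0 t)
      nlinarith [hw0 t]
    · rw [min_eq_left h, min_eq_left, one_pow]
      have := Real.sq_sqrt (hq0 t)
      nlinarith [hw0 t]
  have hs2 : ∑ t, min 1 (w t) ≤ Real.sqrt (T * ∑ t, min 1 (q t)) := by
    have hnn : 0 ≤ ∑ t, min 1 (w t) :=
      Finset.sum_nonneg fun t _ => le_min zero_le_one (hw0 t)
    have hsq : (∑ t, min 1 (w t))^2 ≤ (T : ℝ) * ∑ t, min 1 (q t) := by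
      have h1 := sq_sum_le_card_mul_sum_sq (s := Finset.univ)
        (f := fun t : Fin T => min 1 (w t))
      simp only [Finset.card_univ, Fintype.card_fin] at h1
      calc (∑ t, min 1 (w t))^2 ≤ (T : ℝ) * ∑ t, (min 1 (w t))^2 := h1
        _ = (T : ℝ) * ∑ t, min 1 (q t) := by
            congr 1
            exact Finset.sum_congr rfl fun t _ => hminsq t
    calc ∑ t, min 1 (w t) = Real.sqrt ((∑ t, min 1 (w t))^2) := (Real.sqrt_sq hnn).symm
      _ ≤ _ := Real.sqrt_le_sqrt hsq
  have hs3 : ∑ t, min 1 (q t) ≤ K * (2 * (d * Real.log (1 + c))) := by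
    have hfib : ∑ t, min 1 (q t)
        = ∑ b : Fin K, ∑ t ∈ Finset.univ.filter (fun t : Fin T => a t = b), min 1 (q t) := by
      exact (Finset.sum_fiberwise _ _ _).symm
    rw [hfib]
    calc ∑ b : Fin K, ∑ t ∈ Finset.univ.filter (fun t : Fin T => a t = b), min 1 (q t)
        ≤ ∑ _b : Fin K, 2 * (d * Real.log (1 + c)) :=
          Finset.sum_le_sum fun b _ => hpot b
      _ = K * (2 * (d * Real.log (1 + c))) := by
          rw [Finset.sum_const, Finset.card_univ, Fintype.card_fin, nsmul_eq_mul]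
  have hfin : Real.sqrt (T * ∑ t, min 1 (q t))
      ≤ Real.sqrt (2 * d * K * T * Real.log (1 + c)) := by
    apply Real.sqrt_le_sqrt
    calc (T : ℝ) * ∑ t, min 1 (q t) ≤ (T : ℝ) * (K * (2 * (d * Real.log (1 + c)))) :=
          mul_le_mul_of_nonneg_left hs3 (by positivity)
      _ = 2 * d * K * T * Real.log (1 + c) := by ring
  have h2Lρ : 0 ≤ 2 * Lμ * ρ := by positivity
  calc ∑ t, (sSup ((fun p : Fin K × (Fin d → ℝ) => μ (dotp p.2 (θs p.1))) '' {p | p.2 ∈ D t})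
        - μ (dotp (x t) (θs (a t))))
      ≤ 2 * Lμ * ρ * ∑ t, min 1 (w t) := hsum1
    _ ≤ 2 * Lμ * ρ * Real.sqrt (T * ∑ t, min 1 (q t)) :=
        mul_le_mul_of_nonneg_left hs2 h2Lρ
    _ ≤ 2 * Lμ * ρ * Real.sqrt (2 * d * K * T * Real.log (1 + c)) :=
        mul_le_mul_of_nonneg_left hfin h2Lρ
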